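/- Let R = ℤ[x₂, y₂, z₃]/(2x₂, 2y₂, 2z₃, z₃² − x₂y₂(x₂+y₂)) be the integral cohomology ring of ℝP^∞ × ℝP^∞, graded with |x₂| = |y₂| = 2 and |z₃| = 3. Then for i > 0, the degree-i component of R is an elementary abelian 2-group of rank i/2 + 1 if i is even and rank (i−1)/2 if i is odd, and the degree-0 component is ℤ. -/

import Mathlib

open MvPolynomial

noncomputable section Stmt7Aux

namespace Stmt7

abbrev P : Type := MvPolynomial (Fin 3) ℤ
abbrev Bp : Type := MvPolynomial (Fin 2) (ZMod 2)

abbrev Iset : Set P := {2 * X 0, 2 * X 1, 2 * X 2, (X 2) ^ 2 - X 0 * X 1 * (X 0 + X 1)}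
abbrev Id3 : Ideal P := Ideal.span Iset
abbrev Q : Type := P ⧸ Id3
abbrev mkQ : P →+* Q := Ideal.Quotient.mk Id3

/-! ### Detection ring -/

def fB : Bp := X 0 * X 1 * (X 0 + X 1)
def qpol : Polynomial Bp := Polynomial.X ^ 2 - Polynomial.C fB
lemma qpol_monic : qpol.Monic := Polynomial.monic_X_pow_sub_C _ (by norm_num)
abbrev A : Type := AdjoinRoot qpol

def ψ : P →+* A :=
  (MvPolynomial.aeval ![AdjoinRoot.of qpol (X 0), AdjoinRoot.of qpol (X 1),
    AdjoinRoot.root qpol] : P →ₐ[ℤ] A).toRingHom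

lemma two_Bp : (2 : Bp) = 0 := by
  have h : (C (2 : ZMod 2) : Bp) = 2 := map_ofNat C 2
  rw [← h, show (2 : ZMod 2) = 0 by decide, map_zero]

lemma two_A : (2 : A) = 0 := by
  have : algebraMap Bp A (2 : Bp) = (2 : A) := map_ofNat _ 2
  rw [← this, two_Bp, map_zero]

lemma root_sq : AdjoinRoot.root qpol ^ 2 = AdjoinRoot.of qpol fB := by
  have h := AdjoinRoot.mk_self (f := qpol)
  rw [qpol, map_sub, map_pow, AdjoinRoot.mk_X, AdjoinRoot.mk_C, sub_eq_zero] at h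
  exact h

lemma ψ_ker : ∀ p ∈ Id3, ψ p = 0 := by
  intro p hp
  have : Id3 ≤ RingHom.ker ψ := by
    rw [Ideal.span_le]
    rintro x (rfl | rfl | rfl | rfl) <;>
      simp [RingHom.mem_ker, ψ, two_A, root_sq, fB, mul_add, mul_comm, mul_left_comm]
  exact this hp

def Ψ : Q →+* A := Ideal.Quotient.lift Id3 ψ ψ_ker

def pb : PowerBasis Bp A := AdjoinRoot.powerBasis' qpol_monic

lemma pb_dim : pb.dim = 2 := by
  rw [pb, AdjoinRoot.powerBasis'_dim]
  simp [qpol, Polynomial.natDegree_X_pow_sub_C]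

def j0 : Fin pb.dim := ⟨0, by rw [pb_dim]; norm_num⟩
def j1 : Fin pb.dim := ⟨1, by rw [pb_dim]; norm_num⟩

lemma repr_of_mul_pow (m : Bp) (j : Fin pb.dim) :
    pb.basis.repr (AdjoinRoot.of qpol m * AdjoinRoot.root qpol ^ (j : ℕ)) =
      Finsupp.single j m := by
  have h : AdjoinRoot.of qpol m * AdjoinRoot.root qpol ^ (j : ℕ) = m • pb.basis j := by
    rw [PowerBasis.coe_basis]
    rw [Algebra.smul_def, AdjoinRoot.algebraMap_eq]
    simp [pb]
  rw [h, map_smul, Module.Basis.repr_self, Finsupp.smul_single, smul_eq_mul, mul_one]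

/-! ### Ideal membership lemmas -/

lemma two_mem (a b c : ℕ) (h : 0 < a + b + c) :
    (2 : P) * (X 0 ^ a * X 1 ^ b * X 2 ^ c) ∈ Id3 := by
  have h0 : (2 * X 0 : P) ∈ Id3 := Ideal.subset_span (by simp)
  have h1 : (2 * X 1 : P) ∈ Id3 := Ideal.subset_span (by simp)
  have h2 : (2 * X 2 : P) ∈ Id3 := Ideal.subset_span (by simp)
  rcases a with _ | a
  · rcases b with _ | b
    · rcases c with _ | c
      · omega
      · have : (2 : P) * (X 0 ^ 0 * X 1 ^ 0 * X 2 ^ (c + 1)) =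
            (2 * X 2) * (X 0 ^ 0 * X 1 ^ 0 * X 2 ^ c) := by ring
        rw [this]; exact Ideal.mul_mem_right _ _ h2
    · have : (2 : P) * (X 0 ^ 0 * X 1 ^ (b + 1) * X 2 ^ c) =
          (2 * X 1) * (X 0 ^ 0 * X 1 ^ b * X 2 ^ c) := by ring
      rw [this]; exact Ideal.mul_mem_right _ _ h1
  · have : (2 : P) * (X 0 ^ (a + 1) * X 1 ^ b * X 2 ^ c) =
        (2 * X 0) * (X 0 ^ a * X 1 ^ b * X 2 ^ c) := by ring
    rw [this]; exact Ideal.mul_mem_right _ _ h0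

lemma red (a b c : ℕ) :
    mkQ (X 0 ^ a * X 1 ^ b * X 2 ^ (c + 2)) =
      mkQ (X 0 ^ (a + 2) * X 1 ^ (b + 1) * X 2 ^ c) +
        mkQ (X 0 ^ (a + 1) * X 1 ^ (b + 2) * X 2 ^ c) := by
  rw [← map_add, Ideal.Quotient.mk_eq_mk_iff_sub_mem]
  have : (X 0 ^ a * X 1 ^ b * X 2 ^ (c + 2) : P) -
      (X 0 ^ (a + 2) * X 1 ^ (b + 1) * X 2 ^ c + X 0 ^ (a + 1) * X 1 ^ (b + 2) * X 2 ^ c) =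
      (X 0 ^ a * X 1 ^ b * X 2 ^ c) * ((X 2) ^ 2 - X 0 * X 1 * (X 0 + X 1)) := by ring
  rw [this]
  exact Ideal.mul_mem_left _ _ (Ideal.subset_span (by simp))

/-! ### Spanning families -/

def ev (n : ℕ) (a : Fin (n + 1)) : Q := mkQ (X 0 ^ (a : ℕ) * X 1 ^ (n - (a : ℕ)) * X 2 ^ 0)
def od (n : ℕ) (a : Fin (n + 1)) : Q := mkQ (X 0 ^ (a : ℕ) * X 1 ^ (n - (a : ℕ)) * X 2 ^ 1)

lemma span_even (n : ℕ) : ∀ c, ∀ a b : ℕ, 2 * a + 2 * b + 3 * c = 2 * n →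
    mkQ (X 0 ^ a * X 1 ^ b * X 2 ^ c) ∈ Submodule.span ℤ (Set.range (ev n)) := by
  intro c
  induction c using Nat.strong_induction_on with
  | _ c ih =>
    match c with
    | 0 =>
      intro a b h
      have hb : b = n - a := by omega
      subst hb
      exact Submodule.subset_span ⟨⟨a, by omega⟩, rfl⟩
    | 1 => intro a b h; omega
    | (c + 2) =>
      intro a b h
      rw [red]
      exact add_mem (ih c (by omega) _ _ (by omega)) (ih c (by omega) _ _ (by omega))

lemma span_odd (n : ℕ) : ∀ c, ∀ a b : ℕ, 2 * a + 2 * b + 3 * c = 2 * n + 3 →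
    mkQ (X 0 ^ a * X 1 ^ b * X 2 ^ c) ∈ Submodule.span ℤ (Set.range (od n)) := by
  intro c
  induction c using Nat.strong_induction_on with
  | _ c ih =>
    match c with
    | 0 => intro a b h; omega
    | 1 =>
      intro a b h
      have hb : b = n - a := by omega
      subst hb
      exact Submodule.subset_span ⟨⟨a, by omega⟩, rfl⟩
    | (c + 2) =>
      intro a b h
      rw [red]
      exact add_mem (ih c (by omega) _ _ (by omega)) (ih c (by omega) _ _ (by omega))

/-! ### Weighted homogeneity -/

lemma weight_single (i : Fin 3) (k : ℕ) :
    (Finsupp.weight ![2, 2, 3] (Finsupp.single i k) : ℕ) = k * (![2, 2, 3] i) := by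
  rw [Finsupp.weight_apply, Finsupp.sum_single_index] <;> simp

lemma mono_eq (d : Fin 3 →₀ ℕ) :
    (X 0 ^ (d 0) * X 1 ^ (d 1) * X 2 ^ (d 2) : P) = monomial d 1 := by
  have hd : (Finsupp.single (0 : Fin 3) (d 0) + Finsupp.single 1 (d 1) +
      Finsupp.single 2 (d 2)) = d := by
    ext j
    fin_cases j <;> simp [Finsupp.single_apply]
  rw [X_pow_eq_monomial, X_pow_eq_monomial, X_pow_eq_monomial, monomial_mul, monomial_mul,
    one_mul, one_mul, hd]

lemma weight_eq (d : Fin 3 →₀ ℕ) :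
    (Finsupp.weight ![2, 2, 3] d : ℕ) = 2 * d 0 + 2 * d 1 + 3 * d 2 := by
  have hd : (Finsupp.single (0 : Fin 3) (d 0) + Finsupp.single 1 (d 1) +
      Finsupp.single 2 (d 2)) = d := by
    ext j
    fin_cases j <;> simp [Finsupp.single_apply]
  rw [← hd, map_add, map_add, weight_single, weight_single, weight_single]
  simp [Fin.isValue]
  ring

lemma WH_mono (a b c : ℕ) :
    ((X 0) ^ a * (X 1) ^ b * (X 2) ^ c : P) ∈
      weightedHomogeneousSubmodule ℤ ![2, 2, 3] (2 * a + 2 * b + 3 * c) := by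
  rw [mem_weightedHomogeneousSubmodule, X_pow_eq_monomial, X_pow_eq_monomial,
    X_pow_eq_monomial, monomial_mul, monomial_mul, one_mul, one_mul]
  apply isWeightedHomogeneous_monomial
  rw [map_add, map_add, weight_single, weight_single, weight_single]
  simp [Fin.isValue]
  ring

lemma WH0 (p : P) (hp : IsWeightedHomogeneous ![2, 2, 3] p 0) : p = C (coeff 0 p) := by
  have hz : ∀ d : Fin 3 →₀ ℕ, d ≠ 0 → coeff d p = 0 := by
    intro d hd0
    by_contra h
    have hw := hp h
    have hw' := weight_eq d
    rw [hw] at hw'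
    apply hd0
    ext j
    fin_cases j <;> simp <;> omega
  ext d
  rw [coeff_C]
  split_ifs with h
  · rw [← h]
  · exact hz d (Ne.symm h)

lemma WH1 (p : P) (hp : IsWeightedHomogeneous ![2, 2, 3] p 1) : p = 0 := by
  ext d
  rw [coeff_zero]
  by_contra h
  have hw := hp h
  have hw' := weight_eq d
  rw [hw] at hw'
  omega

/-! ### The detection additive maps -/

def dexp (n : ℕ) (a : Fin (n + 1)) : Fin 2 →₀ ℕ :=
  Finsupp.single 0 (a : ℕ) + Finsupp.single 1 (n - (a : ℕ))

def Φgen (j : Fin pb.dim) (n : ℕ) : Q →+ (Fin (n + 1) → ZMod 2) where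
  toFun x := fun a => MvPolynomial.coeff (dexp n a) (pb.basis.repr (Ψ x) j)
  map_zero' := by funext a; simp
  map_add' x y := by funext a; simp [map_add]

lemma Ψ_mk_mono (a b c : ℕ) :
    Ψ (mkQ (X 0 ^ a * X 1 ^ b * X 2 ^ c)) =
      AdjoinRoot.of qpol ((X 0 : Bp) ^ a * X 1 ^ b) * AdjoinRoot.root qpol ^ c := by
  simp [Ψ, ψ, map_mul, map_pow]

lemma coeff_dexp (n : ℕ) (a a' : Fin (n + 1)) :
    MvPolynomial.coeff (dexp n a') ((X 0 : Bp) ^ (a : ℕ) * X 1 ^ (n - (a : ℕ))) =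
      (Pi.single a 1 : Fin (n + 1) → ZMod 2) a' := by
  rw [X_pow_eq_monomial, X_pow_eq_monomial, monomial_mul, one_mul, coeff_monomial]
  simp only [dexp]
  by_cases h : a' = a
  · subst h
    simp [Pi.single_eq_same]
  · rw [Pi.single_eq_of_ne h]
    refine if_neg ?_
    intro he
    apply h
    have h0 := congrArg (fun f : Fin 2 →₀ ℕ => f 0) he
    simp [Finsupp.single_apply] at h0
    exact Fin.ext h0.symm

lemma Φgen_ev (n : ℕ) (a : Fin (n + 1)) : Φgen j0 n (ev n a) = Pi.single a 1 := by
  funext a'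
  show MvPolynomial.coeff (dexp n a') (pb.basis.repr (Ψ (ev n a)) j0) = _
  rw [ev, Ψ_mk_mono,
    show (AdjoinRoot.root qpol ^ 0 : A) = AdjoinRoot.root qpol ^ ((j0 : ℕ)) from rfl,
    repr_of_mul_pow, Finsupp.single_eq_same, coeff_dexp]

lemma Φgen_od (n : ℕ) (a : Fin (n + 1)) : Φgen j1 n (od n a) = Pi.single a 1 := by
  funext a'
  show MvPolynomial.coeff (dexp n a') (pb.basis.repr (Ψ (od n a)) j1) = _
  rw [od, Ψ_mk_mono,
    show (AdjoinRoot.root qpol ^ 1 : A) = AdjoinRoot.root qpol ^ ((j1 : ℕ)) from rfl,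
    repr_of_mul_pow, Finsupp.single_eq_same, coeff_dexp]

/-! ### The abstract builder -/

lemma build {M : Type} [AddCommGroup M] {k : ℕ} (N : Submodule ℤ M) (v : Fin k → M)
    (hvN : ∀ j, v j ∈ N)
    (hspan : ∀ x ∈ N, x ∈ Submodule.span ℤ (Set.range v))
    (h2 : ∀ j, (2 : ℤ) • v j = 0)
    (Φ : M →+ (Fin k → ZMod 2)) (hΦ : ∀ j, Φ (v j) = Pi.single j 1) :
    Nonempty (N ≃+ (Fin k → ZMod 2)) := by
  set F : N →+ (Fin k → ZMod 2) := Φ.comp (N.subtype.toAddMonoidHom) with hF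
  have hFx : ∀ x : N, F x = Φ (x : M) := fun x => rfl
  refine ⟨AddEquiv.ofBijective F ⟨?_, ?_⟩⟩
  · rw [injective_iff_map_eq_zero]
    intro x hx
    obtain ⟨cf, hcf⟩ := (Submodule.mem_span_range_iff_exists_fun ℤ).mp (hspan (x : M) x.2)
    have key : ∀ j, ((cf j : ZMod 2)) = 0 := by
      intro j
      have h1 : Φ (x : M) = 0 := by rw [← hFx]; exact hx
      rw [← hcf, map_sum] at h1
      have h2' := congrFun h1 j
      simp only [AddMonoidHom.map_zsmul, hΦ, Finset.sum_apply, Pi.smul_apply,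
        Pi.single_apply, smul_ite, smul_zero, Finset.sum_ite_eq,
        Finset.mem_univ, if_true, Pi.zero_apply] at h2'
      rwa [zsmul_one] at h2'
    have hx0 : (x : M) = 0 := by
      rw [← hcf]
      refine Finset.sum_eq_zero fun j _ => ?_
      obtain ⟨d, hd⟩ := (ZMod.intCast_zmod_eq_zero_iff_dvd (cf j) 2).mp (key j)
      push_cast at hd
      rw [hd, mul_comm, mul_smul, h2 j, smul_zero]
    exact Subtype.ext hx0
  · intro t
    refine ⟨⟨∑ j, ((t j).val : ℤ) • v j,
      Submodule.sum_mem _ fun j _ => Submodule.smul_mem _ _ (hvN j)⟩, ?_⟩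
    rw [hFx]
    rw [map_sum]
    funext j'
    simp only [AddMonoidHom.map_zsmul, hΦ, Finset.sum_apply, Pi.smul_apply, Pi.single_apply,
      smul_ite, smul_zero, Finset.sum_ite_eq, Finset.mem_univ, if_true]
    rw [zsmul_one]
    push_cast
    exact ZMod.natCast_rightInverse (t j')

/-! ### Degree zero -/

def ψ0 : P →+* ℤ := (MvPolynomial.aeval (fun _ => (0 : ℤ)) : P →ₐ[ℤ] ℤ).toRingHom

lemma ψ0_ker : ∀ p ∈ Id3, ψ0 p = 0 := by
  intro p hp
  have : Id3 ≤ RingHom.ker ψ0 := by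
    rw [Ideal.span_le]
    rintro x (rfl | rfl | rfl | rfl) <;> simp [RingHom.mem_ker, ψ0]
  exact this hp

def ε : Q →+* ℤ := Ideal.Quotient.lift Id3 ψ0 ψ0_ker

end Stmt7

end Stmt7Aux


open Stmt7

/-- The integral cohomology ring of `ℝP^∞ × ℝP^∞` is
`R = ℤ[x₂,y₂,z₃]/(2x₂, 2y₂, 2z₃, z₃² − x₂y₂(x₂+y₂))`, graded with
`|x₂| = |y₂| = 2`, `|z₃| = 3`.  Its degree-0 component is `ℤ`, and for `i > 0`
its degree-`i` component is an elementary abelian 2-group of rank `i/2 + 1`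
for even `i` and of rank `(i−1)/2` for odd `i`. -/
theorem stmt7
    (I : Ideal (MvPolynomial (Fin 3) ℤ))
    (hI : I = Ideal.span
      {2 * X 0, 2 * X 1, 2 * X 2, (X 2) ^ 2 - X 0 * X 1 * (X 0 + X 1)})
    (w : Fin 3 → ℕ) (hw : w = ![2, 2, 3])
    (comp : ℕ → Submodule ℤ (MvPolynomial (Fin 3) ℤ ⧸ I))
    (hcomp : ∀ i, comp i = Submodule.map (Ideal.Quotient.mkₐ ℤ I).toLinearMap
      (weightedHomogeneousSubmodule ℤ w i)) :
    Nonempty ((comp 0) ≃ₗ[ℤ] ℤ) ∧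
    (∀ i : ℕ, 0 < i → Even i → Nonempty ((comp i) ≃+ (Fin (i / 2 + 1) → ZMod 2))) ∧
    (∀ i : ℕ, 0 < i → ¬ Even i → Nonempty ((comp i) ≃+ (Fin ((i - 1) / 2) → ZMod 2))) := by
  subst hI hw
  have hmk : ∀ p : P, (Ideal.Quotient.mkₐ ℤ Id3).toLinearMap p = mkQ p := fun p => rfl
  refine ⟨?_, ?_, ?_⟩
  · -- degree 0
    rw [hcomp 0]
    set N := Submodule.map (Ideal.Quotient.mkₐ ℤ Id3).toLinearMap
      (weightedHomogeneousSubmodule ℤ ![2, 2, 3] 0) with hN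
    have halg : ∀ m : ℤ, (Ideal.Quotient.mkₐ ℤ Id3).toLinearMap (C m) = algebraMap ℤ Q m := by
      intro m
      rw [show (C m : P) = algebraMap ℤ P m from (MvPolynomial.algebraMap_eq ℤ (Fin 3)).symm ▸ rfl]
      exact (Ideal.Quotient.mkₐ ℤ Id3).commutes m
    have h2 : ∀ m : ℤ, algebraMap ℤ Q m ∈ N :=
      fun m => ⟨C m, isWeightedHomogeneous_C _ _, halg m⟩
    set f : ℤ →ₗ[ℤ] N := LinearMap.codRestrict N (Algebra.linearMap ℤ Q) h2 with hf
    have hfval : ∀ m : ℤ, ((f m : Q)) = algebraMap ℤ Q m := fun m => rfl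
    have hinj : Function.Injective f := by
      intro m₁ m₂ hm
      have h1 : algebraMap ℤ Q m₁ = algebraMap ℤ Q m₂ := by
        rw [← hfval, ← hfval, hm]
      have h3 := congrArg ε h1
      rwa [eq_intCast (algebraMap ℤ Q), eq_intCast (algebraMap ℤ Q),
        map_intCast, map_intCast] at h3
    have hsurj : Function.Surjective f := by
      rintro ⟨x, p, hp, hx⟩
      refine ⟨coeff 0 p, Subtype.ext ?_⟩
      show (f (coeff 0 p) : Q) = x
      rw [hfval, ← halg, ← WH0 p hp]
      exact hx
    exact ⟨(LinearEquiv.ofBijective f ⟨hinj, hsurj⟩).symm⟩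
  · -- even positive degrees
    intro i hi hev
    obtain ⟨r, hr⟩ := hev
    obtain ⟨n, hn⟩ : ∃ n, i = 2 * n := ⟨r, by omega⟩
    have hn1 : 1 ≤ n := by omega
    rw [hcomp i, show i / 2 + 1 = n + 1 by omega]
    refine build _ (ev n) ?_ ?_ ?_ (Φgen j0 n) (Φgen_ev n)
    · intro a
      have ha := a.isLt
      refine ⟨X 0 ^ (a : ℕ) * X 1 ^ (n - (a : ℕ)) * X 2 ^ 0, ?_, rfl⟩
      have h := WH_mono (a : ℕ) (n - (a : ℕ)) 0
      rwa [show 2 * (a : ℕ) + 2 * (n - (a : ℕ)) + 3 * 0 = i by omega] at h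
    · rintro x ⟨p, hp, rfl⟩
      rw [← support_sum_monomial_coeff p, map_sum]
      refine Submodule.sum_mem _ fun d hd => ?_
      have hwd : 2 * d 0 + 2 * d 1 + 3 * d 2 = 2 * n := by
        have h1 := hp (mem_support_iff.mp hd)
        have h2 := weight_eq d
        rw [h1] at h2
        omega
      have hmono : (monomial d (coeff d p) : P) = (coeff d p) • monomial d 1 := by
        rw [← map_smul (monomial d), smul_eq_mul, mul_one]
      rw [hmono, map_smul]
      refine Submodule.smul_mem _ _ ?_
      rw [hmk, ← mono_eq]
      exact span_even n (d 2) (d 0) (d 1) (by omega)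
    · intro a
      have ha := a.isLt
      have hm := two_mem (a : ℕ) (n - (a : ℕ)) 0 (by omega)
      show (2 : ℤ) • ev n a = 0
      rw [two_zsmul, ev, ← map_add,
        show (X 0 ^ (a : ℕ) * X 1 ^ (n - (a : ℕ)) * X 2 ^ 0 +
          X 0 ^ (a : ℕ) * X 1 ^ (n - (a : ℕ)) * X 2 ^ 0 : P) =
          2 * (X 0 ^ (a : ℕ) * X 1 ^ (n - (a : ℕ)) * X 2 ^ 0) by ring]
      exact Ideal.Quotient.eq_zero_iff_mem.mpr hm
  · -- odd positive degrees
    intro i hi hodd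
    rcases eq_or_lt_of_le (show 1 ≤ i from hi) with h1 | h1
    · -- i = 1
      rw [hcomp i, ← h1]
      rw [show (1 - 1) / 2 = 0 by norm_num]
      refine build _ (fun j : Fin 0 => (0 : Q)) (fun j => j.elim0) ?_ (fun j => j.elim0)
        0 (fun j => j.elim0)
      rintro x ⟨p, hp, rfl⟩
      have hp1 : p = 0 := WH1 p hp
      rw [hmk, hp1, map_zero]
      exact Submodule.zero_mem _
    · -- i ≥ 3 odd
      obtain ⟨n, hn⟩ : ∃ n, i = 2 * n + 3 := ⟨(i - 3) / 2, by
        rcases Nat.even_or_odd i with h | h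
        · exact absurd h hodd
        · obtain ⟨m, hm⟩ := h; omega⟩
      rw [hcomp i, show (i - 1) / 2 = n + 1 by omega]
      refine build _ (od n) ?_ ?_ ?_ (Φgen j1 n) (Φgen_od n)
      · intro a
        have ha := a.isLt
        refine ⟨X 0 ^ (a : ℕ) * X 1 ^ (n - (a : ℕ)) * X 2 ^ 1, ?_, rfl⟩
        have h := WH_mono (a : ℕ) (n - (a : ℕ)) 1
        rwa [show 2 * (a : ℕ) + 2 * (n - (a : ℕ)) + 3 * 1 = i by omega] at h
      · rintro x ⟨p, hp, rfl⟩
        rw [← support_sum_monomial_coeff p, map_sum]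
        refine Submodule.sum_mem _ fun d hd => ?_
        have hwd : 2 * d 0 + 2 * d 1 + 3 * d 2 = 2 * n + 3 := by
          have h1 := hp (mem_support_iff.mp hd)
          have h2 := weight_eq d
          rw [h1] at h2
          omega
        have hmono : (monomial d (coeff d p) : P) = (coeff d p) • monomial d 1 := by
          rw [← map_smul (monomial d), smul_eq_mul, mul_one]
        rw [hmono, map_smul]
        refine Submodule.smul_mem _ _ ?_
        rw [hmk, ← mono_eq]
        exact span_odd n (d 2) (d 0) (d 1) (by omega)
      · intro a
        have ha := a.isLt
        have hm := two_mem (a : ℕ) (n - (a : ℕ)) 1 (by omega)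
        show (2 : ℤ) • od n a = 0
        rw [two_zsmul, od, ← map_add,
          show (X 0 ^ (a : ℕ) * X 1 ^ (n - (a : ℕ)) * X 2 ^ 1 +
            X 0 ^ (a : ℕ) * X 1 ^ (n - (a : ℕ)) * X 2 ^ 1 : P) =
            2 * (X 0 ^ (a : ℕ) * X 1 ^ (n - (a : ℕ)) * X 2 ^ 1) by ring]
        exact Ideal.Quotient.eq_zero_iff_mem.mpr hm
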